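/- Let I ⊆ ℝ be an open interval and f, g : I → ℝ smooth with f > 0 and g' > 0 on I. Let k₁, k₂ ∈ ℝ, k₃ ≠ 0, and define T(t,x) = t + k₁, X̃(t,x) = g(x) + k₂, Ũ(t,x,u) = k₃·u·√(f(x)·g'(x)³) on ℝ × I × ℝ. Then the following identities hold at every point: X₁(T) = 1, X₁(X̃) = 0, X₁(Ũ) = 0; X₂(T) = 0, X₂(X̃) = 0, X₂(Ũ) = Ũ; X₄(T) = 0, X₄(X̃) = 2, X₄(Ũ) = 0; and (X₃ + 4k₁·X₁ + k₂·X₄)(T) = 4T, (X₃ + 4k₁·X₁ + k₂·X₄)(X̃) = 2X̃, (X₃ + 4k₁·X₁ + k₂·X₄)(Ũ) = 0. Hence the change of variables maps the vector fields X₁, X₂, X₄, X₃ + 4k₁X₁ + k₂X₄ to ∂_T, U∂_U, 2∂_X, 4T∂_T + 2X∂_X respectively. -/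

import Mathlib

/-- The operator `X₁F = ∂F/∂t`. -/
noncomputable def X1 (F : ℝ → ℝ → ℝ → ℝ) (t x u : ℝ) : ℝ :=
  deriv (fun s => F s x u) t

/-- The operator `X₂F = u·∂F/∂u`. -/
noncomputable def X2 (F : ℝ → ℝ → ℝ → ℝ) (t x u : ℝ) : ℝ :=
  u * deriv (fun v => F t x v) u

/-- The operator `X₃F = 4t·F_t + (2g/g')·F_x − (f'g/(fg') + 3g·g''/g'²)·u·F_u`. -/
noncomputable def X3 (f g : ℝ → ℝ) (F : ℝ → ℝ → ℝ → ℝ) (t x u : ℝ) : ℝ :=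
  4 * t * deriv (fun s => F s x u) t
    + (2 * g x / deriv g x) * deriv (fun y => F t y u) x
    - (deriv f x * g x / (f x * deriv g x)
        + 3 * g x * (deriv^[2] g x) / (deriv g x)^2) * u * deriv (fun v => F t x v) u

/-- The operator `X₄F = (2/g')·F_x − (f'/(fg') + 3g''/g'²)·u·F_u`. -/
noncomputable def X4 (f g : ℝ → ℝ) (F : ℝ → ℝ → ℝ → ℝ) (t x u : ℝ) : ℝ :=
  (2 / deriv g x) * deriv (fun y => F t y u) x
    - (deriv f x / (f x * deriv g x)
        + 3 * (deriv^[2] g x) / (deriv g x)^2) * u * deriv (fun v => F t x v) u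

private lemma aux1 (A B P Q S k₃ u : ℝ) (hApos : 0 < A) (hBpos : 0 < B) (hSpos : 0 < S)
    (hS2 : S ^ 2 = A * B ^ 3) :
    2 / B * (k₃ * u * ((P * B ^ 3 + A * (3 * B ^ 2 * Q)) / (2 * S)))
      - (P / (A * B) + 3 * Q / B ^ 2) * u * (k₃ * S) = 0 := by
  field_simp
  linear_combination (-(k₃ * u * (B * P + A * 3 * Q))) * hS2

private lemma aux2 (A B P Q S G k₁ k₂ k₃ t u : ℝ) (hApos : 0 < A) (hBpos : 0 < B)
    (hSpos : 0 < S) (hS2 : S ^ 2 = A * B ^ 3) :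
    (4 * t * 0 + (2 * G / B) * (k₃ * u * ((P * B ^ 3 + A * (3 * B ^ 2 * Q)) / (2 * S)))
      - (P * G / (A * B) + 3 * G * Q / B ^ 2) * u * (k₃ * S))
    + 4 * k₁ * 0
    + k₂ * (2 / B * (k₃ * u * ((P * B ^ 3 + A * (3 * B ^ 2 * Q)) / (2 * S)))
      - (P / (A * B) + 3 * Q / B ^ 2) * u * (k₃ * S)) = 0 := by
  field_simp
  linear_combination (-(k₃ * u * (B * P + A * 3 * Q) * (G + k₂))) * hS2

/-- the change of variables `T = t + k₁`, `X̃ = g(x) + k₂`,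
`Ũ = k₃·u·√(f·g'³)` maps `X₁, X₂, X₄, X₃ + 4k₁X₁ + k₂X₄` to
`∂_T, U∂_U, 2∂_X, 4T∂_T + 2X∂_X` respectively. -/
theorem statement1
    (I : Set ℝ) (hIopen : IsOpen I) (hIinterval : I.OrdConnected)
    (f g : ℝ → ℝ)
    (hf : ContDiffOn ℝ (⊤ : ℕ∞) f I) (hg : ContDiffOn ℝ (⊤ : ℕ∞) g I)
    (hfpos : ∀ x ∈ I, 0 < f x) (hg' : ∀ x ∈ I, 0 < deriv g x)
    (k₁ k₂ k₃ : ℝ) (hk₃ : k₃ ≠ 0)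
    (T Xt Ut : ℝ → ℝ → ℝ → ℝ)
    (hT : T = fun t _ _ => t + k₁)
    (hXt : Xt = fun _ x _ => g x + k₂)
    (hUt : Ut = fun _ x u => k₃ * u * Real.sqrt (f x * (deriv g x)^3)) :
    ∀ t : ℝ, ∀ x ∈ I, ∀ u : ℝ,
      X1 T t x u = 1 ∧ X1 Xt t x u = 0 ∧ X1 Ut t x u = 0 ∧
      X2 T t x u = 0 ∧ X2 Xt t x u = 0 ∧ X2 Ut t x u = Ut t x u ∧
      X4 f g T t x u = 0 ∧ X4 f g Xt t x u = 2 ∧ X4 f g Ut t x u = 0 ∧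
      X3 f g T t x u + 4 * k₁ * X1 T t x u + k₂ * X4 f g T t x u = 4 * T t x u ∧
      X3 f g Xt t x u + 4 * k₁ * X1 Xt t x u + k₂ * X4 f g Xt t x u = 2 * Xt t x u ∧
      X3 f g Ut t x u + 4 * k₁ * X1 Ut t x u + k₂ * X4 f g Ut t x u = 0 := by
  intro t x hx u
  subst hT hXt hUt
  have hApos : 0 < f x := hfpos x hx
  have hBpos : 0 < deriv g x := hg' x hx
  have hpos : 0 < f x * (deriv g x) ^ 3 := by positivity
  have hSpos : 0 < Real.sqrt (f x * (deriv g x) ^ 3) := Real.sqrt_pos.2 hpos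
  have hS2 : Real.sqrt (f x * (deriv g x) ^ 3) ^ 2 = f x * (deriv g x) ^ 3 :=
    Real.sq_sqrt hpos.le
  -- differentiability facts
  have hfd : HasDerivAt f (deriv f x) x :=
    ((hf.contDiffAt (hIopen.mem_nhds hx)).differentiableAt
      (by simp)).hasDerivAt
  have hg1 : ContDiffOn ℝ (1 : ℕ∞) (deriv g) I :=
    hg.deriv_of_isOpen hIopen (by exact_mod_cast le_top)
  have hg2 : HasDerivAt (deriv g) (deriv^[2] g x) x := by
    have hd : DifferentiableAt ℝ (deriv g) x :=
      (hg1.contDiffAt (hIopen.mem_nhds hx)).differentiableAt (by norm_num)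
    have : deriv (deriv g) x = deriv^[2] g x := by
      simp [Function.iterate_succ, Function.iterate_one]
    exact this ▸ hd.hasDerivAt
  -- derivative of the sqrt expression
  have hprod : HasDerivAt (fun y => f y * (deriv g y) ^ 3)
      (deriv f x * (deriv g x) ^ 3 + f x * (3 * (deriv g x) ^ 2 * deriv^[2] g x)) x := by
    have := hfd.fun_mul (hg2.fun_pow 3)
    simpa [mul_comm, mul_left_comm, mul_assoc] using this
  have hsqrt : HasDerivAt (fun y => Real.sqrt (f y * (deriv g y) ^ 3))
      ((deriv f x * (deriv g x) ^ 3 + f x * (3 * (deriv g x) ^ 2 * deriv^[2] g x))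
        / (2 * Real.sqrt (f x * (deriv g x) ^ 3))) x :=
    hprod.sqrt hpos.ne'
  have hUx : deriv (fun y => k₃ * u * Real.sqrt (f y * (deriv g y) ^ 3)) x
      = k₃ * u * ((deriv f x * (deriv g x) ^ 3 + f x * (3 * (deriv g x) ^ 2 * deriv^[2] g x))
        / (2 * Real.sqrt (f x * (deriv g x) ^ 3))) := by
    have := hsqrt.const_mul (k₃ * u)
    simpa [mul_assoc] using this.deriv
  have hUu : deriv (fun v => k₃ * v * Real.sqrt (f x * (deriv g x) ^ 3)) u
      = k₃ * Real.sqrt (f x * (deriv g x) ^ 3) := by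
    have := ((hasDerivAt_id u).const_mul k₃).mul_const
      (Real.sqrt (f x * (deriv g x) ^ 3))
    simpa using this.deriv
  have hXx : deriv (fun y => g y + k₂) x = deriv g x := deriv_add_const k₂
  have ht1 : deriv (fun s : ℝ => s + k₁) t = 1 := by
    simpa using ((hasDerivAt_id t).add_const k₁).deriv
  refine ⟨?_, ?_, ?_, ?_, ?_, ?_, ?_, ?_, ?_, ?_, ?_, ?_⟩
  · simp [X1, ht1]
  · simp [X1]
  · simp [X1]
  · simp [X2]
  · simp [X2]
  · simp only [X2, hUu]; ring
  · simp [X4]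
  · simp only [X4, hXx, deriv_const]
    field_simp
    ring
  · simp only [X4, hUx, hUu]
    exact aux1 _ _ _ _ _ _ _ hApos hBpos hSpos hS2
  · simp [X3, X1, X4, ht1]; ring
  · simp only [X3, X1, X4, hXx, deriv_const, ht1]
    field_simp
    ring
  · simp only [X3, X1, X4, hUx, hUu, deriv_const]
    exact aux2 _ _ _ _ _ _ k₁ _ _ _ _ hApos hBpos hSpos hS2
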